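/- Let G be a connected simply connected nilpotent Lie group with coherent states ω_{z,ζ}(x) = exp(−i⟨log(zx), ζ⟩) ω(zx) built from a fixed unit vector ω ∈ L²(G). For the left translations (L_z u)(x) = u(z⁻¹x) and f ∈ L^∞(G × g*), the Berezin operator satisfies the covariance relation L_z* Ber_ω(f) L_z = Ber_ω(f(·z⁻¹, ·)), where f(·z⁻¹,·)(x,ξ) := f(xz⁻¹, ξ). -/

import Mathlib

open MeasureTheory ComplexConjugate
open scoped ComplexInnerProductSpace

/-- Covariance of the Berezin quantization under left translations:
with coherent states `ω_{z,ζ}(x) = e^{-i⟨log(zx), ζ⟩} ω(zx)` built from a unit vector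
`ω ∈ L²(G)`, for `f ∈ L^∞(G × 𝔤*)` one has `L_z* Ber_ω(f) L_z = Ber_ω(f(·z⁻¹, ·))`.
Here `T` is `Ber_ω(f)` and `T'` is `Ber_ω(f(·z⁻¹,·))`, both given weakly, `Ω z ζ` is the
coherent state `ω_{z,ζ}`, and `L` is the left regular representation. -/
theorem berezin_left_covariance
    {G : Type*} [Group G] [TopologicalSpace G] [IsTopologicalGroup G]
    [ConnectedSpace G] [SimplyConnectedSpace G] [Group.IsNilpotent G]
    [MeasurableSpace G] [BorelSpace G]
    (μ : Measure G) [μ.IsHaarMeasure] [μ.IsMulRightInvariant] [SigmaFinite μ]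
    {V : Type*} [NormedAddCommGroup V] [NormedSpace ℝ V] [FiniteDimensional ℝ V]
    (e : V ≃ₜ G)
    {D : Type*} [NormedAddCommGroup D] [NormedSpace ℝ D] [FiniteDimensional ℝ D]
    [MeasurableSpace D] [BorelSpace D]
    (ν : Measure D) [SigmaFinite ν]
    (pair : V →ₗ[ℝ] D →ₗ[ℝ] ℝ)
    (ω : Lp ℂ 2 μ) (hω : ‖ω‖ = 1)
    (Ω : G → D → Lp ℂ 2 μ)
    (hΩ : ∀ (z : G) (ζ : D), (Ω z ζ : G → ℂ) =ᵐ[μ]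
      fun x => Complex.exp (-(Complex.I * (pair (e.symm (z * x)) ζ : ℂ))) * ω (z * x))
    (L : G → (Lp ℂ 2 μ →L[ℂ] Lp ℂ 2 μ))
    (hL : ∀ (z : G) (u : Lp ℂ 2 μ), (L z u : G → ℂ) =ᵐ[μ] fun x => u (z⁻¹ * x))
    (f : G × D → ℂ) (hf : MemLp f ⊤ (μ.prod ν))
    (z : G) (T T' : Lp ℂ 2 μ →L[ℂ] Lp ℂ 2 μ)
    (hT : ∀ u v : Lp ℂ 2 μ, ⟪v, T u⟫ =
      ∫ p : G × D, f p * ⟪Ω p.1 p.2, u⟫ * ⟪v, Ω p.1 p.2⟫ ∂(μ.prod ν))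
    (hT' : ∀ u v : Lp ℂ 2 μ, ⟪v, T' u⟫ =
      ∫ p : G × D, f (p.1 * z⁻¹, p.2) * ⟪Ω p.1 p.2, u⟫ * ⟪v, Ω p.1 p.2⟫ ∂(μ.prod ν)) :
    ((ContinuousLinearMap.adjoint (L z)).comp T).comp (L z) = T' := by

  -- inner products of coherent states against translated vectors
  have key : ∀ (a : G) (ζ : D) (u : Lp ℂ 2 μ), ⟪Ω a ζ, L z u⟫ = ⟪Ω (a * z) ζ, u⟫ := by
    intro a ζ u
    rw [MeasureTheory.L2.inner_def, MeasureTheory.L2.inner_def]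
    have h1 : (fun x => ⟪(Ω a ζ : G → ℂ) x, (L z u : G → ℂ) x⟫)
        =ᵐ[μ] fun x => conj ((Ω a ζ : G → ℂ) x) * (u : G → ℂ) (z⁻¹ * x) := by
      filter_upwards [hL z u] with x hx
      rw [RCLike.inner_apply, hx, mul_comm ((u : G → ℂ) (z⁻¹ * x))]
    rw [integral_congr_ae h1]
    have h2 : ∫ x, conj ((Ω a ζ : G → ℂ) x) * (u : G → ℂ) (z⁻¹ * x) ∂μ
        = ∫ x, conj ((Ω a ζ : G → ℂ) (z * x)) * (u : G → ℂ) (z⁻¹ * (z * x)) ∂μ :=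
      (integral_mul_left_eq_self (fun x => conj ((Ω a ζ : G → ℂ) x) * (u : G → ℂ) (z⁻¹ * x)) z).symm
    rw [h2]
    refine integral_congr_ae ?_
    have hq : Measure.QuasiMeasurePreserving (fun x : G => z * x) μ μ :=
      (measurePreserving_mul_left μ z).quasiMeasurePreserving
    have h3 : ((Ω a ζ : G → ℂ) ∘ fun x : G => z * x)
        =ᵐ[μ] ((fun x => Complex.exp (-(Complex.I * (pair (e.symm (a * x)) ζ : ℂ))) * ω (a * x))
          ∘ fun x : G => z * x) := hq.ae_eq_comp (hΩ a ζ)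
    filter_upwards [h3, hΩ (a * z) ζ] with x hx hx2
    simp only [Function.comp_apply] at hx
    rw [RCLike.inner_apply, hx2, hx, inv_mul_cancel_left, mul_assoc, mul_comm ((u : G → ℂ) x)]
  have key2 : ∀ (a : G) (ζ : D) (v : Lp ℂ 2 μ), ⟪L z v, Ω a ζ⟫ = ⟪v, Ω (a * z) ζ⟫ := by
    intro a ζ v
    rw [← inner_conj_symm, key a ζ v, inner_conj_symm]
  -- operator equality via inner products
  refine ContinuousLinearMap.ext fun u => ?_
  refine ext_inner_left ℂ fun v => ?_
  rw [ContinuousLinearMap.comp_apply, ContinuousLinearMap.comp_apply,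
    ContinuousLinearMap.adjoint_inner_right, hT (L z u) (L z v), hT' u v]
  have hmp : MeasurePreserving (fun p : G × D => (p.1 * z, p.2)) (μ.prod ν) (μ.prod ν) :=
    (measurePreserving_mul_right μ z).prod (MeasurePreserving.id ν)
  have hemb : MeasurableEmbedding (fun p : G × D => (p.1 * z, p.2)) :=
    (MeasurableEquiv.prodCongr ((Homeomorph.mulRight z).toMeasurableEquiv)
      (MeasurableEquiv.refl D)).measurableEmbedding
  rw [← hmp.integral_comp hemb
    (fun p : G × D => f (p.1 * z⁻¹, p.2) * ⟪Ω p.1 p.2, u⟫ * ⟪v, Ω p.1 p.2⟫)]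
  refine integral_congr_ae (Filter.Eventually.of_forall fun p => ?_)
  simp only [mul_inv_cancel_right, key p.1 p.2 u, key2 p.1 p.2 v]
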